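/- Let x > 0, X = 2x, h > 0 with h/(X−x) =: δ ∈ (0,1/2), and let f : ℝ → [0,1] be the piecewise linear function that is 0 outside (x,X), 1 on [x+h, X−h], and linear on [x,x+h] and [X−h,X]. Let φ₁ : [0,2x] → ℝ be Lipschitz with constant 1/2, z₁(t) = t+iφ₁(t), A = z₁(x). Then |(2πi)^{-1}∫ₓ^X f(t)·z₁'(t)/(z₁(t)−A) dt| ≥ (1/(2π))·log((1−2δ)/(2δ)) − 2; in particular the integral tends to ∞ in modulus as δ → 0. -/

import Mathlib

open MeasureTheory

lemma re_div_aux (a b c : ℝ) :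
    (((1:ℂ) + (c:ℂ)*Complex.I)/((a:ℂ) + (b:ℂ)*Complex.I)).re
      = (a + c*b)/(a^2+b^2) := by
  simp [Complex.div_re, Complex.normSq_apply]
  ring_nf

lemma norm_one_add_mulI_le (c : ℝ) (hc : |c| ≤ 1/2) :
    ‖(1:ℂ) + (c:ℂ)*Complex.I‖ ≤ 3/2 := by
  calc ‖(1:ℂ) + (c:ℂ)*Complex.I‖ ≤ ‖(1:ℂ)‖ + ‖(c:ℂ)*Complex.I‖ := norm_add_le _ _
  _ ≤ 1 + 1/2 := by
      simp
      linarith [hc]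
  _ ≤ 3/2 := by norm_num

lemma hasDerivAt_halfLog (x t c : ℝ) (φ : ℝ → ℝ) (hφ : HasDerivAt φ c t)
    (hD : (t-x)^2 + (φ t - φ x)^2 ≠ 0) :
    HasDerivAt (fun s => (1/2) * Real.log ((s-x)^2 + (φ s - φ x)^2))
      (((t-x) + (φ t - φ x)*c) / ((t-x)^2 + (φ t - φ x)^2)) t := by
  have h1 : HasDerivAt (fun s : ℝ => (s-x)^2 + (φ s - φ x)^2)
      (2*(t-x) + 2*(φ t - φ x)*c) t := by
    have ha : HasDerivAt (fun s : ℝ => (s-x)^2) (2*(t-x)) t := by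
      have := ((hasDerivAt_id t).sub_const x).fun_pow 2
      simpa using this
    have hb : HasDerivAt (fun s : ℝ => (φ s - φ x)^2) (2*(φ t - φ x)*c) t := by
      have := (hφ.sub_const (φ x)).fun_pow 2
      exact this.congr_deriv (by norm_num)
    exact ha.add hb
  have h2 := (h1.log hD).const_mul (1/2 : ℝ)
  exact h2.congr_deriv (by field_simp)

set_option maxHeartbeats 2000000 in
theorem stmt_19 (x X h δ : ℝ) (hx : 0 < x) (hX : X = 2 * x) (hh : 0 < h)
    (hδ : δ = h / (X - x)) (hδ2 : δ < 1 / 2)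
    (f : ℝ → ℝ)
    (hf0 : ∀ t, t ≤ x ∨ X ≤ t → f t = 0)
    (hf1 : ∀ t ∈ Set.Icc (x + h) (X - h), f t = 1)
    (hfl : ∀ t ∈ Set.Icc x (x + h), f t = (t - x) / h)
    (hfr : ∀ t ∈ Set.Icc (X - h) X, f t = (X - t) / h)
    (φ₁ φ₁' : ℝ → ℝ)
    (hder : ∀ t ∈ Set.Icc 0 (2 * x), HasDerivAt φ₁ (φ₁' t) t)
    (hlip : ∀ t ∈ Set.Icc 0 (2 * x), |φ₁' t| ≤ 1 / 2) :
    (1 / (2 * Real.pi)) * Real.log ((1 - 2 * δ) / (2 * δ)) - 2 ≤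
      ‖(2 * (Real.pi : ℂ) * Complex.I)⁻¹ *
        ∫ t in x..X, (f t : ℂ) * (1 + (φ₁' t : ℂ) * Complex.I) /
          (((t : ℂ) + (φ₁ t : ℂ) * Complex.I) - ((x : ℂ) + (φ₁ x : ℂ) * Complex.I))‖ := by
  subst hX
  have hd2 : δ = h / x := by rw [hδ]; ring_nf
  have hhx : h < x / 2 := by
    have h1 : h / x < 1/2 := hd2 ▸ hδ2
    calc h = (h/x)*x := by field_simp
    _ < (1/2)*x := mul_lt_mul_of_pos_right h1 hx
    _ = x/2 := by ring
  set G : ℝ → ℂ := fun t => ((t:ℂ) + (φ₁ t:ℂ)*Complex.I) - ((x:ℂ) + (φ₁ x:ℂ)*Complex.I)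
    with hGdef
  set p : ℝ → ℝ := fun t => min 1 (max 0 (min ((t-x)/h) ((2*x-t)/h))) with hpdef
  set F : ℝ → ℂ := fun t => ((p t : ℝ):ℂ) * (1 + ((deriv φ₁ t : ℝ):ℂ)*Complex.I) / G t
    with hFdef
  have hsub : Set.Icc x (2*x) ⊆ Set.Icc 0 (2*x) := Set.Icc_subset_Icc (le_of_lt hx) le_rfl
  have hdd : ∀ t ∈ Set.Icc x (2*x), deriv φ₁ t = φ₁' t := fun t ht => (hder t (hsub ht)).deriv
  have hGre : ∀ t : ℝ, (G t).re = t - x := by intro t; simp [hGdef]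
  have hGnorm : ∀ t : ℝ, t - x ≤ ‖G t‖ := by
    intro t
    calc t - x ≤ |(G t).re| := by rw [hGre]; exact le_abs_self _
    _ ≤ ‖G t‖ := Complex.abs_re_le_norm _
  have hGne : ∀ t ∈ Set.Ioc x (2*x), G t ≠ 0 := by
    intro t ht hc
    have h1 := hGre t
    rw [hc] at h1
    simp at h1
    linarith [ht.1]
  -- f agrees with p on [x, 2x]
  have hfp : ∀ t ∈ Set.Icc x (2*x), f t = p t := by
    intro t ht
    rcases le_or_gt t (x+h) with h1 | h1
    · rw [hfl t ⟨ht.1, h1⟩, hpdef]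
      have e1 : (t-x)/h ≤ (2*x-t)/h := by
        apply (div_le_div_iff_of_pos_right hh).mpr; linarith
      have e2 : 0 ≤ (t-x)/h := div_nonneg (by linarith [ht.1]) hh.le
      have e3 : (t-x)/h ≤ 1 := by rw [div_le_one hh]; linarith
      simp only
      rw [min_eq_left e1, max_eq_right e2, min_eq_right e3]
    · rcases le_or_gt t (2*x - h) with h2 | h2
      · rw [hf1 t ⟨h1.le, h2⟩, hpdef]
        have e1 : (1:ℝ) ≤ (t-x)/h := by rw [le_div_iff₀ hh]; linarith
        have e2 : (1:ℝ) ≤ (2*x-t)/h := by rw [le_div_iff₀ hh]; linarith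
        have e3 : (1:ℝ) ≤ min ((t-x)/h) ((2*x-t)/h) := le_min e1 e2
        simp only
        rw [max_eq_right (by linarith : (0:ℝ) ≤ min ((t-x)/h) ((2*x-t)/h)),
          min_eq_left e3]
      · rw [hfr t ⟨h2.le, ht.2⟩, hpdef]
        have e1 : (2*x-t)/h ≤ (t-x)/h := by
          apply (div_le_div_iff_of_pos_right hh).mpr; linarith
        have e2 : 0 ≤ (2*x-t)/h := div_nonneg (by linarith [ht.2]) hh.le
        have e3 : (2*x-t)/h ≤ 1 := by rw [div_le_one hh]; linarith
        simp only
        rw [min_eq_right e1, max_eq_right e2, min_eq_right e3]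
  -- pointwise norm bound
  have hpnn : ∀ t : ℝ, 0 ≤ p t := fun t => le_min zero_le_one (le_max_left _ _)
  have hpa : ∀ t : ℝ, x ≤ t → p t ≤ (t-x)/h := by
    intro t ht
    calc p t ≤ max 0 (min ((t-x)/h) ((2*x-t)/h)) := min_le_right _ _
    _ ≤ max 0 ((t-x)/h) := max_le_max le_rfl (min_le_left _ _)
    _ = (t-x)/h := max_eq_right (div_nonneg (by linarith) hh.le)
  have hFnorm : ∀ t ∈ Set.Ioc x (2*x), ‖F t‖ ≤ 3/(2*h) := by
    intro t ht
    have htx : 0 < t - x := by linarith [ht.1]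
    have hder_bd : |deriv φ₁ t| ≤ 1/2 := by
      rw [hdd t ⟨ht.1.le, ht.2⟩]; exact hlip t (hsub ⟨ht.1.le, ht.2⟩)
    have h1 : ‖F t‖ = p t / ‖G t‖ * ‖(1:ℂ) + ((deriv φ₁ t:ℝ):ℂ)*Complex.I‖ := by
      rw [hFdef]
      simp only [norm_div, norm_mul, Complex.norm_real, Real.norm_eq_abs,
        abs_of_nonneg (hpnn t)]
      ring
    have hkey : p t / ‖G t‖ ≤ 1/h := by
      have h2 : p t / ‖G t‖ ≤ ((t-x)/h) / (t-x) :=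
        div_le_div₀ (div_nonneg htx.le hh.le) (hpa t ht.1.le) htx (hGnorm t)
      have h3 : (t-x)/h/(t-x) = 1/h := by field_simp
      linarith [h2, h3.le]
    calc ‖F t‖ = p t / ‖G t‖ * ‖(1:ℂ) + ((deriv φ₁ t:ℝ):ℂ)*Complex.I‖ := h1
    _ ≤ (1/h) * (3/2) := by
        apply mul_le_mul hkey (norm_one_add_mulI_le _ hder_bd) (norm_nonneg _) (by positivity)
    _ = 3/(2*h) := by ring
  -- measurability and integrability
  have hφcont : ∀ t ∈ Set.Icc (0:ℝ) (2*x), ContinuousWithinAt φ₁ (Set.Icc 0 (2*x)) t :=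
    fun t ht => ((hder t ht).continuousAt).continuousWithinAt
  have hGcont : ContinuousOn G (Set.Icc 0 (2*x)) := by
    apply ContinuousOn.sub
    · exact (Complex.continuous_ofReal.continuousOn).add
        ((Complex.continuous_ofReal.comp_continuousOn hφcont).mul continuousOn_const)
    · exact continuousOn_const
  have hpcont : Continuous fun t : ℝ => ((p t : ℝ):ℂ) := by
    apply Complex.continuous_ofReal.comp
    rw [hpdef]
    exact continuous_const.min ((continuous_const.max
      (((continuous_id.sub continuous_const).div_const h).min
        ((continuous_const.sub continuous_id).div_const h))))
  have hmeas : AEStronglyMeasurable F (volume.restrict (Set.Ioc x (2*x))) := by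
    have h2 : Measurable fun t : ℝ => (1:ℂ) + ((deriv φ₁ t:ℝ):ℂ)*Complex.I :=
      ((Complex.measurable_ofReal.comp (measurable_deriv φ₁)).mul_const _).const_add _
    have h3 : ContinuousOn (fun t => (G t)⁻¹) (Set.Ioc x (2*x)) := by
      apply ContinuousOn.inv₀
      · exact hGcont.mono (fun t ht => hsub ⟨ht.1.le, ht.2⟩)
      · exact hGne
    have h4 : F = fun t => ((p t:ℝ):ℂ) * (1 + ((deriv φ₁ t:ℝ):ℂ)*Complex.I) * (G t)⁻¹ := by
      funext t; rw [hFdef]; simp only [div_eq_mul_inv]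
    rw [h4]
    exact ((hpcont.aestronglyMeasurable).mul h2.aestronglyMeasurable).mul
      (h3.aestronglyMeasurable measurableSet_Ioc)
  have hIOc : IntegrableOn F (Set.Ioc x (2*x)) := by
    apply Integrable.mono' (integrable_const (3/(2*h))) hmeas
    exact (ae_restrict_iff' measurableSet_Ioc).2 (Filter.Eventually.of_forall hFnorm)
  have hle : x ≤ 2*x := by linarith
  have hle1 : x ≤ x + h := by linarith
  have hle2 : x + h ≤ 2*x - h := by linarith
  have hle3 : 2*x - h ≤ 2*x := by linarith
  have hII : IntervalIntegrable F volume x (2*x) :=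
    (intervalIntegrable_iff_integrableOn_Ioc_of_le hle).mpr hIOc
  have hII1 : IntervalIntegrable F volume x (x+h) := by
    apply hII.mono_set
    rw [Set.uIcc_of_le hle1, Set.uIcc_of_le hle]
    exact Set.Icc_subset_Icc le_rfl (by linarith)
  have hII2 : IntervalIntegrable F volume (x+h) (2*x-h) := by
    apply hII.mono_set
    rw [Set.uIcc_of_le hle2, Set.uIcc_of_le hle]
    exact Set.Icc_subset_Icc (by linarith) (by linarith)
  have hII3 : IntervalIntegrable F volume (2*x-h) (2*x) := by
    apply hII.mono_set
    rw [Set.uIcc_of_le hle3, Set.uIcc_of_le hle]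
    exact Set.Icc_subset_Icc (by linarith) le_rfl
  have hII23 : IntervalIntegrable F volume (x+h) (2*x) := by
    apply hII.mono_set
    rw [Set.uIcc_of_le (hle2.trans hle3), Set.uIcc_of_le hle]
    exact Set.Icc_subset_Icc (by linarith) le_rfl
  -- rewrite the original integral as the integral of F
  have hIeq : (∫ t in x..(2*x), (f t:ℂ) * (1 + (φ₁' t:ℂ)*Complex.I) / G t)
      = ∫ t in x..(2*x), F t := by
    apply intervalIntegral.integral_congr
    intro t ht
    rw [Set.uIcc_of_le hle] at ht
    rw [hFdef]
    simp only
    rw [hfp t ht, hdd t ht]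
  have hsplit : (∫ t in x..(2*x), F t)
      = (∫ t in x..(x+h), F t) + (∫ t in (x+h)..(2*x-h), F t) + (∫ t in (2*x-h)..(2*x), F t) := by
    rw [← intervalIntegral.integral_add_adjacent_intervals hII1 hII23,
      ← intervalIntegral.integral_add_adjacent_intervals hII2 hII3]
    ring
  -- side bounds
  have hb1 : ‖∫ t in x..(x+h), F t‖ ≤ 3/2 := by
    have hB := intervalIntegral.norm_integral_le_of_norm_le_const (C := 3/(2*h))
      (f := F) (a := x) (b := x+h) (fun t ht => by
        rw [Set.uIoc_of_le hle1] at ht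
        exact hFnorm t ⟨ht.1, by linarith [ht.2]⟩)
    have : |x + h - x| = h := by rw [abs_of_nonneg (by linarith)]; ring
    rw [this] at hB
    calc ‖∫ t in x..(x+h), F t‖ ≤ 3/(2*h) * h := hB
    _ = 3/2 := by field_simp
  have hb3 : ‖∫ t in (2*x-h)..(2*x), F t‖ ≤ 3/2 := by
    have hB := intervalIntegral.norm_integral_le_of_norm_le_const (C := 3/(2*h))
      (f := F) (a := 2*x-h) (b := 2*x) (fun t ht => by
        rw [Set.uIoc_of_le hle3] at ht
        exact hFnorm t ⟨by linarith [ht.1], ht.2⟩)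
    have : |2*x - (2*x - h)| = h := by rw [abs_of_nonneg (by linarith)]; ring
    rw [this] at hB
    calc ‖∫ t in (2*x-h)..(2*x), F t‖ ≤ 3/(2*h) * h := hB
    _ = 3/2 := by field_simp
  -- the middle integral: real part via FTC
  have hreF : ∀ t ∈ Set.Icc (x+h) (2*x-h), (F t).re
      = ((t-x) + (φ₁ t - φ₁ x)*(φ₁' t)) / ((t-x)^2 + (φ₁ t - φ₁ x)^2) := by
    intro t ht
    have ht' : t ∈ Set.Icc x (2*x) := ⟨by linarith [ht.1], by linarith [ht.2]⟩
    have hp1 : p t = 1 := (hfp t ht').symm.trans (hf1 t ht)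
    rw [hFdef]
    simp only
    rw [hp1, hdd t ht']
    have hGt : G t = ((t - x : ℝ):ℂ) + ((φ₁ t - φ₁ x : ℝ):ℂ)*Complex.I := by
      rw [hGdef]; push_cast; ring
    rw [hGt, show (t - x + (φ₁ t - φ₁ x) * φ₁' t) = (t - x + φ₁' t * (φ₁ t - φ₁ x)) by ring]
    simpa using re_div_aux (t-x) (φ₁ t - φ₁ x) (φ₁' t)
  have hg : ∀ t ∈ Set.uIcc (x+h) (2*x-h),
      HasDerivAt (fun s => (1/2)*Real.log ((s-x)^2+(φ₁ s - φ₁ x)^2)) ((F t).re) t := by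
    intro t ht
    rw [Set.uIcc_of_le hle2] at ht
    have htx : 0 < t - x := by linarith [ht.1]
    have hD0 : 0 < (t-x)^2 + (φ₁ t - φ₁ x)^2 := by
      have h1 : 0 < (t-x)^2 := pow_pos htx 2
      nlinarith [sq_nonneg (φ₁ t - φ₁ x)]
    have ht2 : t ∈ Set.Icc (0:ℝ) (2*x) := ⟨by linarith [ht.1], by linarith [ht.2]⟩
    have hda := hasDerivAt_halfLog x t (φ₁' t) φ₁ (hder t ht2) hD0.ne'
    rw [hreF t ht]
    exact hda
  have hre_int : IntervalIntegrable (fun t => (F t).re) volume (x+h) (2*x-h) :=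
    ⟨hII2.1.re, hII2.2.re⟩
  have hftc : (∫ t in (x+h)..(2*x-h), (F t).re)
      = (1/2)*Real.log ((2*x-h-x)^2+(φ₁ (2*x-h) - φ₁ x)^2)
        - (1/2)*Real.log ((x+h-x)^2+(φ₁ (x+h) - φ₁ x)^2) :=
    intervalIntegral.integral_eq_sub_of_hasDerivAt hg hre_int
  have hre_mid : (∫ t in (x+h)..(2*x-h), F t).re = ∫ t in (x+h)..(2*x-h), (F t).re := by
    have hcc := ContinuousLinearMap.intervalIntegral_comp_comm Complex.reCLM hII2
    simpa using hcc.symm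
  -- Lipschitz bound on φ₁
  have hlips : ∀ y ∈ Set.Icc (0:ℝ) (2*x), |φ₁ y - φ₁ x| ≤ (1/2) * |y - x| := by
    intro y hy
    have hxmem : x ∈ Set.Icc (0:ℝ) (2*x) := ⟨hx.le, by linarith⟩
    have := (convex_Icc (0:ℝ) (2*x)).norm_image_sub_le_of_norm_hasDerivWithin_le
      (fun t ht => (hder t ht).hasDerivWithinAt)
      (fun t ht => by rw [Real.norm_eq_abs]; exact hlip t ht) hxmem hy
    simpa [Real.norm_eq_abs] using this
  have hb1lip : |φ₁ (x+h) - φ₁ x| ≤ h/2 := by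
    have := hlips (x+h) ⟨by linarith, by linarith⟩
    rw [show x + h - x = h by ring, abs_of_nonneg hh.le] at this
    linarith
  -- bound the middle value from below
  have hxh : (0:ℝ) < x - h := by linarith
  have hmidlow : Real.log ((x-2*h)/(2*h))
      ≤ (∫ t in (x+h)..(2*x-h), F t).re := by
    rw [hre_mid, hftc]
    have e1 : Real.log (x-h) ≤ (1/2)*Real.log ((2*x-h-x)^2+(φ₁ (2*x-h) - φ₁ x)^2) := by
      have h1 : (x-h)^2 ≤ (2*x-h-x)^2+(φ₁ (2*x-h) - φ₁ x)^2 := by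
        nlinarith [sq_nonneg (φ₁ (2*x-h) - φ₁ x)]
      have h2 := Real.log_le_log (by positivity) h1
      rw [Real.log_pow] at h2
      push_cast at h2
      linarith
    have e2 : (1/2)*Real.log ((x+h-x)^2+(φ₁ (x+h) - φ₁ x)^2) ≤ Real.log (3/2*h) := by
      have hsq : (φ₁ (x+h) - φ₁ x)^2 ≤ (h/2)^2 := by
        have := abs_le.mp hb1lip
        nlinarith [this.1, this.2]
      have h1 : (x+h-x)^2+(φ₁ (x+h) - φ₁ x)^2 ≤ (3/2*h)^2 := by nlinarith
      have h2 := Real.log_le_log (by nlinarith [sq_nonneg (φ₁ (x+h) - φ₁ x)]) h1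
      rw [Real.log_pow] at h2
      push_cast at h2
      linarith
    have e3 : Real.log ((x-2*h)/(2*h)) ≤ Real.log (x-h) - Real.log (3/2*h) := by
      rw [← Real.log_div (ne_of_gt (by linarith)) (by positivity)]
      apply Real.log_le_log (div_pos (by linarith) (by linarith))
      rw [div_le_div_iff₀ (by positivity) (by positivity)]
      nlinarith
    linarith
  -- assemble
  have hretot : Real.log ((x-2*h)/(2*h)) - 3 ≤ (∫ t in x..(2*x), F t).re := by
    rw [hsplit]
    simp only [Complex.add_re]
    have r1 : -(3/2) ≤ (∫ t in x..(x+h), F t).re := by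
      have h1 := (abs_le.mp (Complex.abs_re_le_norm (∫ t in x..(x+h), F t))).1
      linarith
    have r3 : -(3/2) ≤ (∫ t in (2*x-h)..(2*x), F t).re := by
      have h1 := (abs_le.mp (Complex.abs_re_le_norm (∫ t in (2*x-h)..(2*x), F t))).1
      linarith
    linarith [hmidlow]
  have hnormtot : Real.log ((x-2*h)/(2*h)) - 3 ≤ ‖∫ t in x..(2*x), F t‖ := by
    have h1 := Complex.re_le_norm (∫ t in x..(2*x), F t)
    linarith
  have hargeq : (1 - 2*δ)/(2*δ) = (x-2*h)/(2*h) := by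
    rw [hd2]
    field_simp
  have hpi : (0:ℝ) < 2*Real.pi := by positivity
  have hnormc : ‖(2*(Real.pi:ℂ)*Complex.I)⁻¹‖ = 1/(2*Real.pi) := by
    rw [norm_inv]
    have h1 : ‖2*(Real.pi:ℂ)*Complex.I‖ = 2*Real.pi := by
      simp [abs_of_nonneg Real.pi_pos.le]
    rw [h1]
    exact (one_div _).symm
  rw [hIeq, norm_mul, hnormc, hargeq]
  have h3pi : 3/(2*Real.pi) ≤ 2 := by
    rw [div_le_iff₀ hpi]
    nlinarith [Real.pi_gt_three]
  have hmono : (1/(2*Real.pi)) * (Real.log ((x-2*h)/(2*h)) - 3)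
      ≤ (1/(2*Real.pi)) * ‖∫ t in x..(2*x), F t‖ := by
    apply mul_le_mul_of_nonneg_left hnormtot
    positivity
  calc (1/(2*Real.pi)) * Real.log ((x-2*h)/(2*h)) - 2
      ≤ (1/(2*Real.pi)) * Real.log ((x-2*h)/(2*h)) - 3/(2*Real.pi) := by linarith
  _ = (1/(2*Real.pi)) * (Real.log ((x-2*h)/(2*h)) - 3) := by field_simp
  _ ≤ (1/(2*Real.pi)) * ‖∫ t in x..(2*x), F t‖ := hmono
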